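/- The rank over ℝ of the adjacency matrix of the cycle C_n on n vertices (n ≥ 3) is n-2 if n is divisible by 4, and n otherwise. -/

import Mathlib

open SimpleGraph Module Matrix
open Fin.CommRing

namespace Stmt17Aux

lemma val_two (m : ℕ) : ((2 : Fin (m+3))).val = 2 := by
  have h : ((2:ℕ) : Fin (m+3)).val = 2 % (m+3) := Fin.val_natCast 2 (m+3)
  rw [Nat.cast_ofNat, Nat.mod_eq_of_lt (by omega)] at h
  exact h

lemma add_two_val (m : ℕ) (i : Fin (m+3)) : (i + 2).val = (i.val + 2) % (m+3) := by
  rw [Fin.val_add, val_two]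

lemma mem_ker_iff (m : ℕ) [DecidableRel (cycleGraph (m+3)).Adj] (v : Fin (m+3) → ℝ) :
    ((cycleGraph (m+3)).adjMatrix ℝ) *ᵥ v = 0 ↔ ∀ i, v (i + 2) = - v i := by
  have hne : ∀ i : Fin (m+3), i ≠ i + 2 := by
    intro i h
    have hv2 := congrArg Fin.val h
    rw [add_two_val] at hv2
    have hi : i.val < m + 3 := i.isLt
    rcases Nat.lt_or_ge (i.val + 2) (m+3) with h' | h'
    · rw [Nat.mod_eq_of_lt h'] at hv2; omega
    · have hm : (i.val + 2) % (m+3) = i.val + 2 - (m+3) := by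
        rw [Nat.mod_eq_sub_mod h', Nat.mod_eq_of_lt (by omega)]
      omega
  have hnf : ∀ w : Fin (m+3), (cycleGraph (m+3)).neighborFinset w = {w - 1, w + 1} := by
    intro w
    have h := cycleGraph_neighborFinset (n := m+1) (v := w)
    convert h using 2
  constructor
  · intro h i
    have h1 : v i + v (i + 2) = 0 := by
      have h2 := congrFun h (i + 1)
      rw [adjMatrix_mulVec_apply, hnf (i+1),
        show i+1-1 = i by ring, show i+1+1 = i+2 by ring,
        Finset.sum_pair (hne i)] at h2
      simpa using h2
    linarith
  · intro h
    funext j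
    rw [adjMatrix_mulVec_apply, hnf j]
    have e2 : j + 1 = (j - 1) + 2 := by ring
    have hne' : j - 1 ≠ j + 1 := by rw [e2]; exact hne _
    rw [Finset.sum_pair hne', e2, h (j - 1)]
    simp

lemma sign_iter (m : ℕ) (v : Fin (m+3) → ℝ) (hv : ∀ i, v (i + 2) = - v i) :
    ∀ (k : ℕ) (i : Fin (m+3)), v (i + ((2*k : ℕ) : Fin (m+3))) = (-1:ℝ)^k * v i := by
  intro k
  induction k with
  | zero => intro i; simp
  | succ k ih =>
    intro i
    have hc : ((2*(k+1) : ℕ) : Fin (m+3)) = ((2*k : ℕ) : Fin (m+3)) + 2 := by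
      push_cast; ring
    rw [hc, ← add_assoc, hv (i + ((2*k : ℕ) : Fin (m+3))), ih i, pow_succ]
    ring

lemma ker_eq_zero (m : ℕ) (v : Fin (m+3) → ℝ) (hv : ∀ i, v (i + 2) = - v i)
    (h0 : v 0 = 0) (h1 : v 1 = 0) : v = 0 := by
  funext i
  have hd : i = ((i.val % 2 : ℕ) : Fin (m+3)) + ((2 * (i.val / 2) : ℕ) : Fin (m+3)) := by
    rw [← Nat.cast_add]
    have h : i.val % 2 + 2 * (i.val / 2) = i.val := by omega
    rw [h, Fin.cast_val_eq_self]
  rw [hd, sign_iter m v hv (i.val/2)]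
  rcases Nat.mod_two_eq_zero_or_one i.val with h | h <;> rw [h]
  · rw [Nat.cast_zero, h0]; simp
  · rw [Nat.cast_one, h1]; simp

noncomputable def g (a b : ℝ) : ℕ → ℝ := fun k => (-1:ℝ)^(k/2) * (if k % 2 = 0 then a else b)

lemma g_add_two (a b : ℝ) (k : ℕ) : g a b (k+2) = - g a b k := by
  unfold g
  have h1 : (k+2)/2 = k/2 + 1 := by omega
  have h2 : (k+2)%2 = k%2 := by omega
  rw [h1, h2, pow_succ]; ring

lemma g_period (a b : ℝ) (q : ℕ) : ∀ k, g a b (k + 4*q) = g a b k := by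
  induction q with
  | zero => intro k; simp
  | succ q ih =>
    intro k
    have h : k + 4*(q+1) = ((k + 4*q) + 2) + 2 := by ring
    rw [h, g_add_two, g_add_two, ih k, neg_neg]

lemma g_mod (a b : ℝ) {n : ℕ} (h4 : 4 ∣ n) (hn : 0 < n) (k : ℕ) :
    g a b (k % n) = g a b k := by
  obtain ⟨q, rfl⟩ := h4
  conv_rhs => rw [← Nat.mod_add_div k (4*q)]
  have h : 4*q*(k/(4*q)) = 4*(q*(k/(4*q))) := by ring
  rw [h, g_period]

end Stmt17Aux

open Stmt17Aux

/-- The rank over `ℝ` of the adjacency matrix of the cycle `C_n` on `n ≥ 3` vertices is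
`n - 2` if `4 ∣ n` and `n` otherwise. -/
theorem stmt_17 (n : ℕ) (hn : 3 ≤ n) [DecidableRel (cycleGraph n).Adj] :
    ((cycleGraph n).adjMatrix ℝ).rank = if 4 ∣ n then n - 2 else n := by
  obtain ⟨m, rfl⟩ : ∃ m, n = m + 3 := ⟨n - 3, by omega⟩
  set A := (cycleGraph (m+3)).adjMatrix ℝ with hA
  have hrn := LinearMap.finrank_range_add_finrank_ker A.mulVecLin
  have hdom : finrank ℝ (Fin (m+3) → ℝ) = m + 3 := Module.finrank_fin_fun ℝ
  rw [hdom] at hrn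
  have hrank : A.rank = finrank ℝ (LinearMap.range A.mulVecLin) := rfl
  by_cases h4 : 4 ∣ (m+3)
  · -- kernel has dimension 2
    rw [if_pos h4]
    have hker : finrank ℝ (LinearMap.ker A.mulVecLin) = 2 := by
      let π : (Fin (m+3) → ℝ) →ₗ[ℝ] ℝ × ℝ :=
        LinearMap.prod (LinearMap.proj 0) (LinearMap.proj 1)
      have hbij : Function.Bijective (π.comp (LinearMap.ker A.mulVecLin).subtype) := by
        constructor
        · rintro ⟨v, hv⟩ ⟨w, hw⟩ hvw
          have hvw' : v 0 = w 0 ∧ v 1 = w 1 := by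
            have h01 : (v 0, v 1) = (w 0, w 1) := hvw
            exact ⟨congrArg Prod.fst h01, congrArg Prod.snd h01⟩
          have hv' : ∀ i, (v - w) (i + 2) = - (v - w) i := by
            have hvk := (mem_ker_iff m v).mp (by rwa [← Matrix.mulVecLin_apply, ← LinearMap.mem_ker])
            have hwk := (mem_ker_iff m w).mp (by rwa [← Matrix.mulVecLin_apply, ← LinearMap.mem_ker])
            intro i
            simp only [Pi.sub_apply, hvk i, hwk i]
            ring
          have := ker_eq_zero m (v - w) hv'
            (by simp [hvw'.1]) (by simp [hvw'.2])
          have hvw2 : v = w := by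
            funext i
            have := congrFun this i
            simp only [Pi.sub_apply, Pi.zero_apply] at this
            linarith
          exact Subtype.ext hvw2
        · rintro ⟨a, b⟩
          set v : Fin (m+3) → ℝ := fun i => g a b i.val with hvdef
          have hv : ∀ i, v (i + 2) = - v i := by
            intro i
            show g a b (i + 2).val = - g a b i.val
            rw [add_two_val, g_mod a b h4 (by omega), g_add_two]
          have hmem : v ∈ LinearMap.ker A.mulVecLin := by
            rw [LinearMap.mem_ker, Matrix.mulVecLin_apply, mem_ker_iff m v]
            exact hv
          refine ⟨⟨v, hmem⟩, ?_⟩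
          show (v 0, v 1) = (a, b)
          have hv0 : v 0 = a := by show g a b (0 : Fin (m+3)).val = a; simp [g]
          have hv1 : v 1 = b := by show g a b (1 : Fin (m+3)).val = b; simp [g]
          rw [hv0, hv1]
      have heq := LinearEquiv.finrank_eq (LinearEquiv.ofBijective _ hbij)
      rw [heq, Module.finrank_prod, Module.finrank_self]
    rw [hrank]
    omega
  · -- kernel is trivial
    rw [if_neg h4]
    have hker : LinearMap.ker A.mulVecLin = ⊥ := by
      rw [LinearMap.ker_eq_bot']
      intro v hv
      rw [Matrix.mulVecLin_apply, mem_ker_iff m v] at hv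
      obtain ⟨t, ht1, ht2⟩ : ∃ t, t % 2 = 1 ∧ (m+3) ∣ 2*t := by
        by_cases h2 : 2 ∣ (m+3)
        · refine ⟨(m+3)/2, by omega, ?_⟩
          have h : 2*((m+3)/2) = m+3 := by omega
          rw [h]
        · exact ⟨m+3, by omega, ⟨2, by ring⟩⟩
      funext i
      have h1 := sign_iter m v hv t i
      rw [Fin.natCast_eq_zero.mpr ht2, add_zero] at h1
      have hodd : (-1:ℝ)^t = -1 := Odd.neg_one_pow ⟨t/2, by omega⟩
      rw [hodd] at h1
      have : v i = 0 := by linarith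
      exact this
    rw [hker, finrank_bot] at hrn
    rw [hrank]
    omega
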